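/- Rounding lemma for types near a target distribution: Let P, Q be positive probability distributions on {1,...,k} with P ≠ Q, and let Γ*(n) be the distribution Γ*_i = P_i + √(r̄_n)(D(P‖Q) − α_i)P_i/√V(P‖Q) with r̄_n = Θ(1/n) and α_i = ln(P_i/Q_i). Then there exist a constant κ > 0 and N ∈ ℕ such that for every n ≥ N there is a type T*_n ∈ 𝒫_n (i.e., n T*_n(a_i) ∈ ℤ_{≥0} for all i and Σ_i n T*_n(a_i) = n) with d_{χ²}(T*_n, P) ≤ r̄_n = d_{χ²}(Γ*(n), P) and |n ℓ(Γ*(n)) − n ℓ(T*_n)| ≤ κ, where ℓ(Γ) = Σ_i (Γ_i − P_i) α_i. -/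

import Mathlib

set_option maxHeartbeats 1000000 in
theorem rounding_lemma_for_types (k : ℕ) (hk : 2 ≤ k)
    (P Q : Fin k → ℝ)
    (hPpos : ∀ i, 0 < P i) (hPsum : ∑ i, P i = 1)
    (hQpos : ∀ i, 0 < Q i) (hQsum : ∑ i, Q i = 1)
    (hPQ : P ≠ Q)
    (D V τ : ℝ)
    (hD : D = ∑ i, P i * Real.log (P i / Q i))
    (hV : V = ∑ i, P i * (Real.log (P i / Q i) - D) ^ 2)
    (hτmem : ∃ j, Real.log (P j / Q j) - D = τ ∧ 0 < Real.log (P j / Q j) - D)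
    (hτmax : ∀ j, 0 < Real.log (P j / Q j) - D → Real.log (P j / Q j) - D ≤ τ)
    (rbar : ℕ → ℝ)
    (c₁ c₂ : ℝ) (hc₁ : 0 < c₁) (hc₂ : 0 < c₂) (N₀ : ℕ)
    (hrbar : ∀ n ≥ N₀, c₁ / n ≤ rbar n ∧ rbar n ≤ c₂ / n)
    (hrpos : ∀ n, 0 < rbar n)
    (hrτ : ∀ n, Real.sqrt (rbar n) < Real.sqrt V / τ)
    (Γstar : ℕ → Fin k → ℝ)
    (hΓstar : ∀ n i, Γstar n i =
      P i + Real.sqrt (rbar n) * (D - Real.log (P i / Q i)) * P i / Real.sqrt V) :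
    ∃ κ > 0, ∃ N : ℕ, ∀ n ≥ N, ∃ T : Fin k → ℝ,
      (∀ i, ∃ m : ℕ, T i = (m : ℝ) / n) ∧
      (∑ i, T i = 1) ∧
      (∑ i, (T i - P i) ^ 2 / P i ≤ rbar n) ∧
      |(n : ℝ) * (∑ i, (Γstar n i - P i) * Real.log (P i / Q i))
        - (n : ℝ) * (∑ i, (T i - P i) * Real.log (P i / Q i))| ≤ κ := by
  classical
  set L : Fin k → ℝ := fun i => Real.log (P i / Q i) with hLdef
  have hLr : ∀ i, Real.log (P i / Q i) = L i := fun i => rfl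
  simp only [hLr] at hD hV hτmem hτmax hΓstar ⊢
  obtain ⟨j₀, hj₀eq, hj₀pos⟩ := hτmem
  have hτpos : 0 < τ := by rw [← hj₀eq]; exact hj₀pos
  have hVpos : 0 < V := by
    rw [hV]
    refine Finset.sum_pos' (fun i _ => mul_nonneg (hPpos i).le (sq_nonneg _))
      ⟨j₀, Finset.mem_univ _, mul_pos (hPpos j₀) (pow_pos hj₀pos 2)⟩
  set sV : ℝ := Real.sqrt V with hsVdef
  have hsV : 0 < sV := Real.sqrt_pos.mpr hVpos
  have hsV2 : sV ^ 2 = V := Real.sq_sqrt hVpos.le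
  have hPle1 : ∀ i, P i ≤ 1 := by
    intro i
    rw [← hPsum]
    exact Finset.single_le_sum (fun j _ => (hPpos j).le) (Finset.mem_univ i)
  have hk2 : (2 : ℝ) ≤ (k : ℝ) := by exact_mod_cast hk
  have hk0 : (0 : ℝ) < (k : ℝ) := by linarith
  -- constants
  set A : ℝ := ∑ i, |L i| with hAdef
  set M : ℝ := ∑ i, |D - L i| with hMdef
  set Ip : ℝ := ∑ i, (P i)⁻¹ with hIpdef
  have hA0 : 0 ≤ A := Finset.sum_nonneg fun i _ => abs_nonneg _
  have hM0 : 0 ≤ M := Finset.sum_nonneg fun i _ => abs_nonneg _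
  have hIp0 : 0 ≤ Ip := Finset.sum_nonneg fun i _ => (inv_nonneg).mpr (hPpos i).le
  have hLA : ∀ i, |L i| ≤ A := fun i =>
    Finset.single_le_sum (fun j _ => abs_nonneg (L j)) (Finset.mem_univ i)
  have hDM : ∀ i, |D - L i| ≤ M := fun i =>
    Finset.single_le_sum (fun j _ => abs_nonneg (D - L j)) (Finset.mem_univ i)
  set C₀ : ℝ := 2 * k * M * Real.sqrt c₂ / sV + k ^ 2 * Ip with hC₀def
  have hC₀0 : 0 ≤ C₀ := by
    refine add_nonneg (div_nonneg ?_ hsV.le) (mul_nonneg (by positivity) hIp0)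
    exact mul_nonneg (mul_nonneg (by positivity) hM0) (Real.sqrt_nonneg _)
  have hcκ : 0 ≤ C₀ * Real.sqrt c₂ * M / (c₁ * sV) + (k : ℝ) := by
    refine add_nonneg (div_nonneg ?_ (mul_nonneg hc₁.le hsV.le)) hk0.le
    exact mul_nonneg (mul_nonneg hC₀0 (Real.sqrt_nonneg _)) hM0
  set κ : ℝ := (C₀ * Real.sqrt c₂ * M / (c₁ * sV) + k) * A + 1 with hκdef
  have hκpos : 0 < κ := by
    have := mul_nonneg hcκ hA0
    rw [hκdef]; linarith
  refine ⟨κ, hκpos, max (max N₀ 1) (⌈(C₀ / c₁) ^ 2⌉₊ + 1), ?_⟩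
  intro n hn
  have hnN₀ : N₀ ≤ n := le_trans (le_trans (le_max_left _ _) (le_max_left _ _)) hn
  have hn1 : 1 ≤ n := le_trans (le_trans (le_max_right _ _) (le_max_left _ _)) hn
  have hnceil : ⌈(C₀ / c₁) ^ 2⌉₊ + 1 ≤ n := le_trans (le_max_right _ _) hn
  have hnr1 : (1 : ℝ) ≤ (n : ℝ) := by exact_mod_cast hn1
  have hnr0 : (0 : ℝ) < (n : ℝ) := lt_of_lt_of_le one_pos hnr1
  set s : ℝ := Real.sqrt n with hsdef
  have hsn0 : 0 < s := Real.sqrt_pos.mpr hnr0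
  have hss : s * s = (n : ℝ) := Real.mul_self_sqrt hnr0.le
  have h1s : 1 ≤ s := by
    rw [hsdef, show (1 : ℝ) = Real.sqrt 1 by simp]
    exact Real.sqrt_le_sqrt hnr1
  have hsnn : s ≤ (n : ℝ) := by
    calc s = s * 1 := (mul_one s).symm
      _ ≤ s * s := by gcongr
      _ = (n : ℝ) := hss
  have hsqn : C₀ / c₁ ≤ s := by
    have h1 : ((C₀ / c₁) ^ 2 : ℝ) ≤ (n : ℝ) := by
      calc ((C₀ / c₁) ^ 2 : ℝ) ≤ (⌈(C₀ / c₁) ^ 2⌉₊ : ℝ) := Nat.le_ceil _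
        _ ≤ (n : ℝ) := by exact_mod_cast le_trans (Nat.le_succ _) hnceil
    have h2 := Real.sqrt_le_sqrt h1
    rwa [Real.sqrt_sq (by positivity)] at h2
  obtain ⟨hr1, hr2⟩ := hrbar n hnN₀
  have hrn : 0 < rbar n := hrpos n
  set sr : ℝ := Real.sqrt (rbar n) with hsrdef
  have hsr0 : 0 < sr := Real.sqrt_pos.mpr hrn
  have hsr2 : sr ^ 2 = rbar n := Real.sq_sqrt hrn.le
  have hsrle : sr ≤ Real.sqrt c₂ / s := by
    rw [hsrdef, hsdef, ← Real.sqrt_div hc₂.le]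
    exact Real.sqrt_le_sqrt hr2
  -- epsilon
  set ε : ℝ := C₀ / (c₁ * s) with hεdef
  have hε0 : 0 ≤ ε := div_nonneg hC₀0 (mul_nonneg hc₁.le hsn0.le)
  have hε1 : ε ≤ 1 := by
    rw [hεdef, div_le_one (mul_pos hc₁ hsn0)]
    calc C₀ = (C₀ / c₁) * c₁ := by rw [div_mul_cancel₀ _ hc₁.ne']
      _ ≤ s * c₁ := by gcongr
      _ = c₁ * s := by ring
  -- the direction vector
  set G : Fin k → ℝ := fun i => sr * (D - L i) * P i / sV with hGdef
  have hΓG : ∀ i, Γstar n i = P i + G i := fun i => hΓstar n i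
  have hGsum : ∑ i, G i = 0 := by
    have h1 : ∑ i, (D - L i) * P i = 0 := by
      have h2 : ∑ i, (D - L i) * P i = D * (∑ i, P i) - ∑ i, P i * L i := by
        rw [Finset.mul_sum, ← Finset.sum_sub_distrib]
        exact Finset.sum_congr rfl fun i _ => by ring
      rw [h2, hPsum, ← hD]; ring
    have h3 : ∑ i, G i = (∑ i, (D - L i) * P i) * (sr / sV) := by
      rw [Finset.sum_mul]
      exact Finset.sum_congr rfl fun i _ => by show sr * (D - L i) * P i / sV = _; ring
    rw [h3, h1, zero_mul]
  have hGchi : ∑ i, G i ^ 2 / P i = rbar n := by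
    have h1 : ∀ i, G i ^ 2 / P i = rbar n / V * (P i * (L i - D) ^ 2) := by
      intro i
      have hPi : P i ≠ 0 := (hPpos i).ne'
      show (sr * (D - L i) * P i / sV) ^ 2 / P i = _
      have e1 : (sr * (D - L i) * P i / sV) ^ 2
          = rbar n * ((D - L i) ^ 2 * P i ^ 2) / V := by
        rw [div_pow, show (sr * (D - L i) * P i) ^ 2
          = sr ^ 2 * ((D - L i) ^ 2 * P i ^ 2) by ring, hsr2, hsV2]
      rw [e1]
      field_simp
      ring
    rw [Finset.sum_congr rfl fun i _ => h1 i, ← Finset.mul_sum, ← hV]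
    field_simp
  have hGabs : ∀ i, |G i| = sr * |D - L i| * P i / sV := by
    intro i
    show |sr * (D - L i) * P i / sV| = _
    rw [abs_div, abs_mul, abs_mul, abs_of_nonneg hsr0.le,
      abs_of_nonneg (hPpos i).le, abs_of_nonneg hsV.le]
  have hGabsP : ∀ i, |G i| / P i = sr * |D - L i| / sV := by
    intro i
    rw [hGabs i]
    field_simp [(hPpos i).ne']
  have hGgtP : ∀ i, -P i < G i := by
    intro i
    rcases le_or_gt 0 (D - L i) with h | h
    · have hg : 0 ≤ G i := by
        show 0 ≤ sr * (D - L i) * P i / sV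
        exact div_nonneg (mul_nonneg (mul_nonneg hsr0.le h) (hPpos i).le) hsV.le
      linarith [hPpos i]
    · have hpos : 0 < L i - D := by linarith
      have hle : L i - D ≤ τ := hτmax i hpos
      have hlt : sr * τ < sV := by
        have h4 := hrτ n
        rw [← hsrdef] at h4
        calc sr * τ < (sV / τ) * τ := by gcongr
          _ = sV := by field_simp
      have hGi : G i = -(sr * (L i - D) * P i / sV) := by
        show sr * (D - L i) * P i / sV = _; ring_nf
      rw [hGi]
      have h2 : sr * (L i - D) * P i / sV < P i := by
        rw [div_lt_iff₀ hsV]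
        have h5 := mul_le_mul_of_nonneg_right (mul_le_mul_of_nonneg_left hle hsr0.le) (hPpos i).le
        have h6 := mul_lt_mul_of_pos_right hlt (hPpos i)
        have h7 : sr * (L i - D) * P i = sr * (L i - D) * P i := rfl
        linarith [h5, h6]
      linarith
  -- the shrunk point
  set Γ' : Fin k → ℝ := fun i => P i + (1 - ε) * G i with hΓ'def
  have hΓ'eq : ∀ i, Γ' i = P i + (1 - ε) * G i := fun i => rfl
  have hΓ'pos : ∀ i, 0 < Γ' i := by
    intro i
    rw [hΓ'eq]
    rcases le_or_gt 0 (G i) with h | h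
    · have := mul_nonneg (by linarith : (0:ℝ) ≤ 1 - ε) h
      linarith [hPpos i]
    · have h6 : 0 ≤ ε * (-G i) := mul_nonneg hε0 (by linarith)
      have h7 : G i ≤ (1 - ε) * G i := by
        have h8 : (1 - ε) * G i - G i = ε * (-G i) := by ring
        linarith
      linarith [hGgtP i]
  have hΓ'sum : ∑ i, Γ' i = 1 := by
    rw [Finset.sum_congr rfl fun i _ => hΓ'eq i, Finset.sum_add_distrib, hPsum,
      ← Finset.mul_sum, hGsum]
    ring
  -- the rounding
  set i₀ : Fin k := ⟨0, by omega⟩ with hi₀def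
  set S : ℕ := ∑ i ∈ Finset.univ.erase i₀, ⌊(n : ℝ) * Γ' i⌋₊ with hSdef
  have herase : ∑ i ∈ Finset.univ.erase i₀, Γ' i = 1 - Γ' i₀ := by
    have h5 := Finset.add_sum_erase Finset.univ Γ' (Finset.mem_univ i₀)
    rw [hΓ'sum] at h5
    linarith
  have hSlt : S < n := by
    have h1 : (S : ℝ) < (n : ℝ) := by
      have h2 : (S : ℝ) ≤ ∑ i ∈ Finset.univ.erase i₀, (n : ℝ) * Γ' i := by
        rw [hSdef]
        push_cast
        exact Finset.sum_le_sum fun i _ =>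
          Nat.floor_le (mul_nonneg hnr0.le (hΓ'pos i).le)
      have h4 : ∑ i ∈ Finset.univ.erase i₀, (n : ℝ) * Γ' i = (n : ℝ) - (n : ℝ) * Γ' i₀ := by
        rw [← Finset.mul_sum, herase]; ring
      have h5 : 0 < (n : ℝ) * Γ' i₀ := mul_pos hnr0 (hΓ'pos i₀)
      linarith
    exact_mod_cast h1
  set m : Fin k → ℕ := fun i => if i = i₀ then n - S else ⌊(n : ℝ) * Γ' i⌋₊ with hmdef
  set T : Fin k → ℝ := fun i => (m i : ℝ) / n with hTdef
  have hTeq : ∀ i, T i = (m i : ℝ) / n := fun i => rfl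
  have hmne : ∀ i, i ≠ i₀ → m i = ⌊(n : ℝ) * Γ' i⌋₊ := by
    intro i hi
    show (if i = i₀ then n - S else ⌊(n : ℝ) * Γ' i⌋₊) = _
    rw [if_neg hi]
  have hmi₀ : m i₀ = n - S := by
    show (if i₀ = i₀ then n - S else ⌊(n : ℝ) * Γ' i₀⌋₊) = _
    rw [if_pos rfl]
  -- sum of T is 1
  have hTsum : ∑ i, T i = 1 := by
    have hsm : ∑ i, m i = n := by
      have h1 := Finset.add_sum_erase Finset.univ m (Finset.mem_univ i₀)
      have h2 : ∑ i ∈ Finset.univ.erase i₀, m i = S := by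
        rw [hSdef]
        exact Finset.sum_congr rfl fun i hi => hmne i (Finset.ne_of_mem_erase hi)
      rw [h2, hmi₀] at h1
      omega
    rw [Finset.sum_congr rfl fun i _ => hTeq i, ← Finset.sum_div]
    rw [← Nat.cast_sum, hsm]
    field_simp
  -- error bounds
  have he : ∀ i, |T i - Γ' i| ≤ (k : ℝ) / n := by
    intro i
    rcases eq_or_ne i i₀ with hi | hi
    · rw [hi]
      have hTi : T i₀ = ((n : ℝ) - (S : ℝ)) / n := by
        rw [hTeq, hmi₀, Nat.cast_sub hSlt.le]
      have hcast : (S : ℝ) = ∑ j ∈ Finset.univ.erase i₀, (⌊(n : ℝ) * Γ' j⌋₊ : ℝ) := by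
        rw [hSdef]; push_cast; rfl
      have hei : T i₀ - Γ' i₀ = ∑ j ∈ Finset.univ.erase i₀, (Γ' j - (⌊(n : ℝ) * Γ' j⌋₊ : ℝ) / n) := by
        rw [Finset.sum_sub_distrib, herase, hTi, ← Finset.sum_div, ← hcast]
        field_simp
        ring
      have hterm : ∀ j ∈ Finset.univ.erase i₀,
          Γ' j - (⌊(n : ℝ) * Γ' j⌋₊ : ℝ) / n ∈ Set.Icc (0 : ℝ) (1 / n) := by
        intro j _
        have hf1 : (⌊(n : ℝ) * Γ' j⌋₊ : ℝ) ≤ (n : ℝ) * Γ' j :=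
          Nat.floor_le (mul_nonneg hnr0.le (hΓ'pos j).le)
        have hf2 : (n : ℝ) * Γ' j < (⌊(n : ℝ) * Γ' j⌋₊ : ℝ) + 1 := Nat.lt_floor_add_one _
        constructor
        · rw [sub_nonneg, div_le_iff₀ hnr0]
          linarith
        · rw [sub_le_iff_le_add, ← add_div, le_div_iff₀ hnr0]
          linarith
      have hnn : 0 ≤ T i₀ - Γ' i₀ := by
        rw [hei]
        exact Finset.sum_nonneg fun j hj => (hterm j hj).1
      have hub : T i₀ - Γ' i₀ ≤ (k : ℝ) / n := by
        rw [hei]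
        calc ∑ j ∈ Finset.univ.erase i₀, (Γ' j - (⌊(n : ℝ) * Γ' j⌋₊ : ℝ) / n)
            ≤ ∑ _j ∈ Finset.univ.erase i₀, (1 / n : ℝ) :=
              Finset.sum_le_sum fun j hj => (hterm j hj).2
          _ = ((Finset.univ.erase i₀).card : ℝ) * (1 / n) := by
              rw [Finset.sum_const, nsmul_eq_mul]
          _ ≤ (k : ℝ) * (1 / n) := by
              have hcard : ((Finset.univ.erase i₀).card : ℝ) ≤ (k : ℝ) := by
                have := Finset.card_le_card (Finset.erase_subset i₀ (Finset.univ : Finset (Fin k)))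
                simp only [Finset.card_univ, Fintype.card_fin] at this
                exact_mod_cast this
              have h1n : (0:ℝ) ≤ 1 / n := by positivity
              exact mul_le_mul_of_nonneg_right hcard h1n
          _ = (k : ℝ) / n := by ring
      rw [abs_of_nonneg hnn]
      exact hub
    · have hTi : T i = (⌊(n : ℝ) * Γ' i⌋₊ : ℝ) / n := by rw [hTeq, hmne i hi]
      have hf1 : (⌊(n : ℝ) * Γ' i⌋₊ : ℝ) ≤ (n : ℝ) * Γ' i :=
        Nat.floor_le (mul_nonneg hnr0.le (hΓ'pos i).le)
      have hf2 : (n : ℝ) * Γ' i < (⌊(n : ℝ) * Γ' i⌋₊ : ℝ) + 1 := Nat.lt_floor_add_one _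
      have key : T i - Γ' i = ((⌊(n : ℝ) * Γ' i⌋₊ : ℝ) - (n : ℝ) * Γ' i) / n := by
        rw [hTi]
        field_simp
      have habs1 : |(⌊(n : ℝ) * Γ' i⌋₊ : ℝ) - (n : ℝ) * Γ' i| ≤ 1 :=
        abs_le.mpr ⟨by linarith, by linarith⟩
      rw [key, abs_div, abs_of_nonneg hnr0.le]
      calc |(⌊(n : ℝ) * Γ' i⌋₊ : ℝ) - (n : ℝ) * Γ' i| / n ≤ 1 / n :=
            (div_le_div_iff_of_pos_right hnr0).mpr habs1
        _ ≤ (k : ℝ) / n := (div_le_div_iff_of_pos_right hnr0).mpr (by linarith)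
  -- chi squared bound
  have hTP : ∀ i, T i - P i = (1 - ε) * G i + (T i - Γ' i) := by
    intro i
    have := hΓ'eq i
    linarith
  have hchi : ∑ i, (T i - P i) ^ 2 / P i ≤ rbar n := by
    have step : ∀ i, (T i - P i) ^ 2 / P i ≤
        (1 - ε) ^ 2 * (G i ^ 2 / P i) + 2 * ((k : ℝ) / n) * (|G i| / P i)
          + ((k : ℝ) / n) ^ 2 * (P i)⁻¹ := by
      intro i
      have hPi : 0 < P i := hPpos i
      have heb := abs_le.mp (he i)
      have hGe : (1 - ε) * G i * (T i - Γ' i) ≤ |G i| * ((k : ℝ) / n) := by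
        calc (1 - ε) * G i * (T i - Γ' i) ≤ |(1 - ε) * G i * (T i - Γ' i)| := le_abs_self _
          _ = (1 - ε) * |G i| * |T i - Γ' i| := by
              rw [abs_mul, abs_mul, abs_of_nonneg (by linarith : (0:ℝ) ≤ 1 - ε)]
          _ ≤ 1 * |G i| * ((k : ℝ) / n) := by
              have h1 : (1 - ε) * |G i| ≤ 1 * |G i| :=
                mul_le_mul_of_nonneg_right (by linarith) (abs_nonneg _)
              exact mul_le_mul h1 (he i) (abs_nonneg _) (by positivity)
          _ = |G i| * ((k : ℝ) / n) := by ring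
      have he2 : (T i - Γ' i) ^ 2 ≤ ((k : ℝ) / n) ^ 2 := by
        have := sq_le_sq' (by linarith [heb.1]) heb.2
        exact this
      have hnum : (T i - P i) ^ 2 ≤
          (1 - ε) ^ 2 * G i ^ 2 + 2 * ((k : ℝ) / n) * |G i| + ((k : ℝ) / n) ^ 2 := by
        rw [hTP i]
        have expand : ((1 - ε) * G i + (T i - Γ' i)) ^ 2
            = (1 - ε) ^ 2 * G i ^ 2 + 2 * ((1 - ε) * G i * (T i - Γ' i))
              + (T i - Γ' i) ^ 2 := by ring
        rw [expand]
        linarith [hGe, he2]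
      calc (T i - P i) ^ 2 / P i
          ≤ ((1 - ε) ^ 2 * G i ^ 2 + 2 * ((k : ℝ) / n) * |G i| + ((k : ℝ) / n) ^ 2) / P i :=
            (div_le_div_iff_of_pos_right hPi).mpr hnum
        _ = (1 - ε) ^ 2 * (G i ^ 2 / P i) + 2 * ((k : ℝ) / n) * (|G i| / P i)
            + ((k : ℝ) / n) ^ 2 * (P i)⁻¹ := by
            field_simp
    have hsum1 : ∑ i, ((1 - ε) ^ 2 * (G i ^ 2 / P i) + 2 * ((k : ℝ) / n) * (|G i| / P i)
        + ((k : ℝ) / n) ^ 2 * (P i)⁻¹)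
        = (1 - ε) ^ 2 * rbar n + 2 * ((k : ℝ) / n) * ((sr / sV) * M)
          + ((k : ℝ) / n) ^ 2 * Ip := by
      have hs1 : ∑ i, (1 - ε) ^ 2 * (G i ^ 2 / P i) = (1 - ε) ^ 2 * rbar n := by
        rw [← Finset.mul_sum, hGchi]
      have hs2 : ∑ i, 2 * ((k : ℝ) / n) * (|G i| / P i)
          = 2 * ((k : ℝ) / n) * ((sr / sV) * M) := by
        rw [← Finset.mul_sum]
        congr 1
        rw [Finset.sum_congr rfl fun i _ => hGabsP i, hMdef, Finset.mul_sum]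
        exact Finset.sum_congr rfl fun i _ => by ring
      have hs3 : ∑ i, ((k : ℝ) / n) ^ 2 * (P i)⁻¹ = ((k : ℝ) / n) ^ 2 * Ip := by
        rw [← Finset.mul_sum, hIpdef]
      rw [Finset.sum_add_distrib, Finset.sum_add_distrib, hs1, hs2, hs3]
    have hmain : ∑ i, (T i - P i) ^ 2 / P i ≤
        (1 - ε) ^ 2 * rbar n + 2 * ((k : ℝ) / n) * ((sr / sV) * M)
          + ((k : ℝ) / n) ^ 2 * Ip := by
      rw [← hsum1]
      exact Finset.sum_le_sum fun i _ => step i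
    -- numeric bounds
    have hb1 : (1 - ε) ^ 2 * rbar n ≤ rbar n - ε * rbar n := by
      have h8 : ε * ε * rbar n ≤ ε * rbar n := by
        have := mul_le_mul_of_nonneg_right (mul_le_mul_of_nonneg_left hε1 hε0) hrn.le
        simpa using this
      have h9 : (1 - ε) ^ 2 * rbar n = rbar n - 2 * (ε * rbar n) + ε * ε * rbar n := by ring
      linarith [h8]
    have hb2 : C₀ / (s * (n : ℝ)) ≤ ε * rbar n := by
      have h9 : ε * (c₁ / n) ≤ ε * rbar n := mul_le_mul_of_nonneg_left hr1 hε0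
      have h10 : ε * (c₁ / n) = C₀ / (s * (n : ℝ)) := by
        rw [hεdef, div_mul_div_comm,
          div_eq_div_iff (by positivity : (c₁ * s) * (n : ℝ) ≠ 0)
            (by positivity : s * (n : ℝ) ≠ 0)]
        ring
      linarith
    have hb3 : 2 * ((k : ℝ) / n) * ((sr / sV) * M) ≤ 2 * k * M * Real.sqrt c₂ / sV / (s * n) := by
      have e2 : 2 * ((k : ℝ) / n) * ((sr / sV) * M) = (2 * k * M / (sV * n)) * sr := by
        field_simp
        try ring
        try simp
      have e3 : (2 * (k:ℝ) * M / (sV * n)) * (Real.sqrt c₂ / s)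
          = 2 * k * M * Real.sqrt c₂ / sV / (s * n) := by
        field_simp
        try ring
        try simp
      rw [e2, ← e3]
      exact mul_le_mul_of_nonneg_left hsrle (by positivity)
    have hb4 : ((k : ℝ) / n) ^ 2 * Ip ≤ (k : ℝ) ^ 2 * Ip / (s * n) := by
      have e4 : ((k : ℝ) / n) ^ 2 * Ip = (k : ℝ) ^ 2 * Ip / (n * n) := by
        field_simp
        try ring
        try simp
      rw [e4]
      apply div_le_div_of_nonneg_left (by positivity) (by positivity)
      exact mul_le_mul_of_nonneg_right hsnn hnr0.le
    have hsplitC : C₀ / (s * (n : ℝ))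
        = 2 * k * M * Real.sqrt c₂ / sV / (s * n) + (k : ℝ) ^ 2 * Ip / (s * n) := by
      rw [hC₀def, add_div]
    linarith [hmain, hb1, hb2, hb3, hb4]
  -- final linear functional bound
  have hkap : ∀ i, |Γstar n i - T i|
      ≤ (C₀ * Real.sqrt c₂ * M / (c₁ * sV) + (k : ℝ)) / n := by
    intro i
    have hΓT : Γstar n i - T i = ε * G i - (T i - Γ' i) := by
      have h0 := hΓG i
      have h1 := hΓ'eq i
      have h2 := hTP i
      linarith
    have habs : |Γstar n i - T i| ≤ ε * |G i| + |T i - Γ' i| := by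
      rw [hΓT]
      calc |ε * G i - (T i - Γ' i)| ≤ |ε * G i| + |T i - Γ' i| := abs_sub _ _
        _ = ε * |G i| + |T i - Γ' i| := by rw [abs_mul, abs_of_nonneg hε0]
    have hG2 : |G i| ≤ sr * M / sV := by
      rw [hGabs i]
      have h3 : sr * |D - L i| * P i ≤ sr * M * 1 :=
        mul_le_mul (mul_le_mul_of_nonneg_left (hDM i) hsr0.le) (hPle1 i)
          (hPpos i).le (mul_nonneg hsr0.le hM0)
      rw [mul_one] at h3
      exact (div_le_div_iff_of_pos_right hsV).mpr h3
    have hεG : ε * |G i| ≤ C₀ * Real.sqrt c₂ * M / (c₁ * sV) / n := by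
      calc ε * |G i| ≤ ε * (sr * M / sV) := mul_le_mul_of_nonneg_left hG2 hε0
        _ ≤ ε * ((Real.sqrt c₂ / s) * M / sV) := by
            refine mul_le_mul_of_nonneg_left ?_ hε0
            exact (div_le_div_iff_of_pos_right hsV).mpr (mul_le_mul_of_nonneg_right hsrle hM0)
        _ = C₀ * Real.sqrt c₂ * M / (c₁ * sV) / (s * s) := by
            rw [hεdef]
            field_simp
            try ring
            try simp
        _ = C₀ * Real.sqrt c₂ * M / (c₁ * sV) / n := by rw [hss]
    calc |Γstar n i - T i| ≤ ε * |G i| + |T i - Γ' i| := habs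
      _ ≤ C₀ * Real.sqrt c₂ * M / (c₁ * sV) / n + (k : ℝ) / n := add_le_add hεG (he i)
      _ = (C₀ * Real.sqrt c₂ * M / (c₁ * sV) + (k : ℝ)) / n := by rw [← add_div]
  refine ⟨T, fun i => ⟨m i, rfl⟩, hTsum, hchi, ?_⟩
  have hre : (n : ℝ) * (∑ i, (Γstar n i - P i) * L i) - (n : ℝ) * (∑ i, (T i - P i) * L i)
      = (n : ℝ) * ∑ i, (Γstar n i - T i) * L i := by
    rw [← mul_sub, ← Finset.sum_sub_distrib]
    congr 1
    exact Finset.sum_congr rfl fun i _ => by ring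
  rw [hre, abs_mul, abs_of_nonneg hnr0.le]
  have hsum2 : |∑ i, (Γstar n i - T i) * L i|
      ≤ ((C₀ * Real.sqrt c₂ * M / (c₁ * sV) + (k : ℝ)) / n) * A := by
    calc |∑ i, (Γstar n i - T i) * L i| ≤ ∑ i, |(Γstar n i - T i) * L i| :=
          Finset.abs_sum_le_sum_abs _ _
      _ ≤ ∑ i, ((C₀ * Real.sqrt c₂ * M / (c₁ * sV) + (k : ℝ)) / n) * |L i| :=
          Finset.sum_le_sum fun i _ => by
            rw [abs_mul]
            exact mul_le_mul_of_nonneg_right (hkap i) (abs_nonneg _)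
      _ = ((C₀ * Real.sqrt c₂ * M / (c₁ * sV) + (k : ℝ)) / n) * A := by
          rw [← Finset.mul_sum, hAdef]
  have hCnn : 0 ≤ C₀ * Real.sqrt c₂ * M / (c₁ * sV) + (k : ℝ) := hcκ
  calc (n : ℝ) * |∑ i, (Γstar n i - T i) * L i|
      ≤ (n : ℝ) * (((C₀ * Real.sqrt c₂ * M / (c₁ * sV) + (k : ℝ)) / n) * A) :=
        mul_le_mul_of_nonneg_left hsum2 hnr0.le
    _ = (C₀ * Real.sqrt c₂ * M / (c₁ * sV) + (k : ℝ)) * A := by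
        field_simp
        try ring
        try simp
    _ ≤ κ := by rw [hκdef]; linarith
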